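/- The stabilizer Γ = {g ∈ GL₂(ℂ) : (t₁³+t₂³)∘g = t₁³+t₂³} consists exactly of the 18 matrices of the two shapes [[ω^a, 0],[0, ω^b]] and [[0, ω^a],[ω^b, 0]] with a, b ∈ {0,1,2}, where ω = e^{2πi/3} is a primitive third root of unity. In particular Γ is a finite subgroup of GL₂(ℂ) of order 18. -/

import Mathlib

open MvPolynomial

/-- Substitution of a 2×2 matrix into a polynomial in two variables:
`tᵢ ↦ gᵢ₁ t₁ + gᵢ₂ t₂`. -/
noncomputable def bsub (g : Matrix (Fin 2) (Fin 2) ℂ) (p : MvPolynomial (Fin 2) ℂ) :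
    MvPolynomial (Fin 2) ℂ :=
  aeval (fun i => C (g i 0) * X 0 + C (g i 1) * X 1) p

lemma bsub_one (p : MvPolynomial (Fin 2) ℂ) : bsub 1 p = p := by
  have : (fun i => C ((1 : Matrix (Fin 2) (Fin 2) ℂ) i 0) * X 0
      + C ((1 : Matrix (Fin 2) (Fin 2) ℂ) i 1) * X 1) = (X : Fin 2 → MvPolynomial (Fin 2) ℂ) := by
    funext i
    fin_cases i <;> simp [Matrix.one_apply]
  rw [bsub, this, aeval_X_left_apply]

lemma bsub_mul (g h : Matrix (Fin 2) (Fin 2) ℂ) (p : MvPolynomial (Fin 2) ℂ) :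
    bsub (g * h) p = bsub h (bsub g p) := by
  unfold bsub
  rw [← AlgHom.comp_apply]
  refine DFunLike.congr_fun ?_ p
  apply algHom_ext
  intro i
  simp [Matrix.mul_apply, Fin.sum_univ_two]
  ring

/-- The binary cubic `t₁³ + t₂³`. -/
noncomputable def cubicDiag : MvPolynomial (Fin 2) ℂ := X 0 ^ 3 + X 1 ^ 3

/-- The stabilizer `Γ` of the binary cubic `t₁³ + t₂³` in `GL₂(ℂ)`. -/
noncomputable def Gamma : Subgroup (GL (Fin 2) ℂ) where
  carrier := {g | bsub (↑g) cubicDiag = cubicDiag}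
  one_mem' := bsub_one _
  mul_mem' := by
    intro g h hg hh
    show bsub (↑(g * h)) cubicDiag = cubicDiag
    rw [Units.val_mul, bsub_mul, hg, hh]
  inv_mem' := by
    intro g hg
    show bsub (↑g⁻¹) cubicDiag = cubicDiag
    have hg' : bsub (↑g) cubicDiag = cubicDiag := hg
    have h1 : bsub ((↑g : Matrix (Fin 2) (Fin 2) ℂ) * (↑g⁻¹ : Matrix (Fin 2) (Fin 2) ℂ)) cubicDiag
        = bsub (↑g⁻¹ : Matrix (Fin 2) (Fin 2) ℂ) cubicDiag := by
      rw [bsub_mul, hg']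
    have h2 : (↑g : Matrix (Fin 2) (Fin 2) ℂ) * (↑g⁻¹ : Matrix (Fin 2) (Fin 2) ℂ) = 1 := by
      rw [← Units.val_mul, mul_inv_cancel, Units.val_one]
    rw [← h1, h2, bsub_one]

/-- A primitive third root of unity. -/
noncomputable def ω : ℂ := Complex.exp (2 * Real.pi * Complex.I / 3)


lemma hω : IsPrimitiveRoot ω 3 := by
  have h3 : ((3:ℕ):ℂ) = 3 := by norm_num
  rw [ω]
  simpa [h3] using Complex.isPrimitiveRoot_exp 3 (by norm_num)

lemma ω3 : ω ^ 3 = 1 := hω.pow_eq_one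

lemma ωsum : ω ^ 2 + ω + 1 = 0 := by
  have h1 : ω ≠ 1 := hω.ne_one (by norm_num)
  have h : (ω - 1) * (ω ^ 2 + ω + 1) = 0 := by linear_combination ω3
  rcases mul_eq_zero.mp h with h' | h'
  · exact absurd (by linear_combination h') h1
  · exact h'

lemma ωpow3 (a : ℕ) : (ω ^ a) ^ 3 = 1 := by
  rw [← pow_mul, mul_comm, pow_mul, ω3, one_pow]

lemma ωne (a : ℕ) : ω ^ a ≠ 0 := by
  intro h
  have := ωpow3 a
  rw [h] at this
  simp at this

lemma cube_root (x : ℂ) (hx : x ^ 3 = 1) : ∃ a : Fin 3, x = ω ^ (a : ℕ) := by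
  have h : (x - 1) * (x - ω) * (x - ω ^ 2) = 0 := by
    linear_combination hx + (x - 1) * ω3 + (x - x^2) * ωsum
  rcases mul_eq_zero.mp h with h' | h'
  · rcases mul_eq_zero.mp h' with h'' | h''
    · exact ⟨0, by simpa using sub_eq_zero.mp h''⟩
    · exact ⟨1, by simpa using sub_eq_zero.mp h''⟩
  · exact ⟨2, sub_eq_zero.mp h'⟩

lemma key_alg (a b c d : ℂ) (hdet : a * d - b * c ≠ 0)
    (h1 : a^3 + c^3 = 1) (h2 : b^3 + d^3 = 1)
    (h3 : a^2*b + c^2*d = 0) (h4 : a*b^2 + c*d^2 = 0) :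
    (b = 0 ∧ c = 0 ∧ a^3 = 1 ∧ d^3 = 1) ∨ (a = 0 ∧ d = 0 ∧ b^3 = 1 ∧ c^3 = 1) := by
  by_cases hb : b = 0
  · subst hb
    have hd : d ≠ 0 := by
      intro hd; rw [hd] at h2; simp at h2
    have hc : c = 0 := by
      have : c^2 * d = 0 := by linear_combination h3
      rcases mul_eq_zero.mp this with h | h
      · exact pow_eq_zero_iff (by norm_num) |>.mp h
      · exact absurd h hd
    refine Or.inl ⟨rfl, hc, ?_, ?_⟩
    · rw [hc] at h1; linear_combination h1
    · linear_combination h2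
  · by_cases ha : a = 0
    · subst ha
      have hc : c ≠ 0 := by
        intro hc; apply hdet; rw [hc]; ring
      have hd : d = 0 := by
        have : c^2 * d = 0 := by linear_combination h3
        rcases mul_eq_zero.mp this with h | h
        · exact absurd (pow_eq_zero_iff (by norm_num) |>.mp h) hc
        · exact h
      refine Or.inr ⟨rfl, hd, ?_, ?_⟩
      · rw [hd] at h2; linear_combination h2
      · linear_combination h1
    · exfalso
      have hc : c ≠ 0 := by
        intro hc
        rw [hc] at h3
        have : a^2 * b = 0 := by linear_combination h3
        rcases mul_eq_zero.mp this with h | h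
        · exact ha (pow_eq_zero_iff (by norm_num) |>.mp h)
        · exact hb h
      have hd : d ≠ 0 := by
        intro hd
        rw [hd] at h4
        have : a * b^2 = 0 := by linear_combination h4
        rcases mul_eq_zero.mp this with h | h
        · exact ha h
        · exact hb (pow_eq_zero_iff (by norm_num) |>.mp h)
      have key : a * b * (a * d - b * c) = 0 := by
        linear_combination d * h3 - c * h4
      rcases mul_eq_zero.mp key with h | h
      · rcases mul_eq_zero.mp h with h' | h'
        · exact ha h'
        · exact hb h'
      · exact hdet h

lemma bsub_eval (g : Matrix (Fin 2) (Fin 2) ℂ) (hg : bsub g cubicDiag = cubicDiag)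
    (x y : ℂ) :
    (g 0 0 * x + g 0 1 * y)^3 + (g 1 0 * x + g 1 1 * y)^3 = x^3 + y^3 := by
  have := congrArg (eval ![x, y]) hg
  simpa [bsub, cubicDiag] using this

/-- The diagonal element of `Γ`. -/
noncomputable def dG (a b : Fin 3) : GL (Fin 2) ℂ :=
  ⟨Matrix.of ![![ω ^ (a:ℕ), 0], ![0, ω ^ (b:ℕ)]],
   Matrix.of ![![(ω ^ (a:ℕ))^2, 0], ![0, (ω ^ (b:ℕ))^2]],
   by
    ext i j
    fin_cases i <;> fin_cases j <;>
      simp [Matrix.mul_apply, Fin.sum_univ_two, Matrix.one_apply, ← pow_succ', ωpow3],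
   by
    ext i j
    fin_cases i <;> fin_cases j <;>
      simp [Matrix.mul_apply, Fin.sum_univ_two, Matrix.one_apply, ← pow_succ, ωpow3]⟩

/-- The antidiagonal element of `Γ`. -/
noncomputable def aG (a b : Fin 3) : GL (Fin 2) ℂ :=
  ⟨Matrix.of ![![0, ω ^ (a:ℕ)], ![ω ^ (b:ℕ), 0]],
   Matrix.of ![![0, (ω ^ (b:ℕ))^2], ![(ω ^ (a:ℕ))^2, 0]],
   by
    ext i j
    fin_cases i <;> fin_cases j <;>
      simp [Matrix.mul_apply, Fin.sum_univ_two, Matrix.one_apply, ← pow_succ', ωpow3],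
   by
    ext i j
    fin_cases i <;> fin_cases j <;>
      simp [Matrix.mul_apply, Fin.sum_univ_two, Matrix.one_apply, ← pow_succ, ωpow3]⟩

lemma mem_diag (x y : ℂ) (hx : x^3 = 1) (hy : y^3 = 1) :
    bsub ![![x, 0], ![0, y]] cubicDiag = cubicDiag := by
  simp only [bsub, cubicDiag, map_add, map_pow, aeval_X]
  simp only [Matrix.cons_val', Matrix.cons_val_zero, Matrix.cons_val_one, Matrix.head_cons,
    Matrix.empty_val', Matrix.cons_val_fin_one, Matrix.head_fin_const, map_zero, zero_mul,
    add_zero, zero_add, mul_pow, ← C_pow, hx, hy, map_one, one_mul]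

lemma mem_anti (x y : ℂ) (hx : x^3 = 1) (hy : y^3 = 1) :
    bsub ![![0, x], ![y, 0]] cubicDiag = cubicDiag := by
  simp only [bsub, cubicDiag, map_add, map_pow, aeval_X]
  simp only [Matrix.cons_val', Matrix.cons_val_zero, Matrix.cons_val_one, Matrix.head_cons,
    Matrix.empty_val', Matrix.cons_val_fin_one, Matrix.head_fin_const, map_zero, zero_mul,
    add_zero, zero_add, mul_pow, ← C_pow, hx, hy, map_one, one_mul]
  ring

lemma dG_mem (a b : Fin 3) : dG a b ∈ Gamma :=
  mem_diag _ _ (ωpow3 a) (ωpow3 b)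

lemma aG_mem (a b : Fin 3) : aG a b ∈ Gamma :=
  mem_anti _ _ (ωpow3 a) (ωpow3 b)

lemma gamma_forward (g : GL (Fin 2) ℂ) (hg : g ∈ Gamma) :
    ∃ a b : Fin 3,
      (↑g : Matrix (Fin 2) (Fin 2) ℂ) = ![![ω ^ (a : ℕ), 0], ![0, ω ^ (b : ℕ)]] ∨
      (↑g : Matrix (Fin 2) (Fin 2) ℂ) = ![![0, ω ^ (a : ℕ)], ![ω ^ (b : ℕ), 0]] := by
  have hg' : bsub (↑g) cubicDiag = cubicDiag := hg
  set M : Matrix (Fin 2) (Fin 2) ℂ := ↑g with hM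
  have hdet : M 0 0 * M 1 1 - M 0 1 * M 1 0 ≠ 0 := by
    have hu : IsUnit M.det := (Matrix.isUnit_iff_isUnit_det M).mp g.isUnit
    have := hu.ne_zero
    rwa [Matrix.det_fin_two] at this
  have E1 := bsub_eval M hg' 1 0
  have E2 := bsub_eval M hg' 0 1
  have E3 := bsub_eval M hg' 1 1
  have E4 := bsub_eval M hg' 1 (-1)
  have h1 : (M 0 0)^3 + (M 1 0)^3 = 1 := by linear_combination E1
  have h2 : (M 0 1)^3 + (M 1 1)^3 = 1 := by linear_combination E2
  have h3 : (M 0 0)^2 * (M 0 1) + (M 1 0)^2 * (M 1 1) = 0 := by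
    linear_combination (1/6) * E3 - (1/6) * E4 - (1/3) * h2
  have h4 : (M 0 0) * (M 0 1)^2 + (M 1 0) * (M 1 1)^2 = 0 := by
    linear_combination (1/6) * E3 + (1/6) * E4 - (1/3) * h1
  rcases key_alg (M 0 0) (M 0 1) (M 1 0) (M 1 1) hdet h1 h2 h3 h4 with
    ⟨hb, hc, ha3, hd3⟩ | ⟨ha, hd, hb3, hc3⟩
  · obtain ⟨a, ha⟩ := cube_root _ ha3
    obtain ⟨b, hbb⟩ := cube_root _ hd3
    refine ⟨a, b, Or.inl ?_⟩
    ext i j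
    fin_cases i <;> fin_cases j <;> simp [← ha, ← hbb, hb, hc]
  · obtain ⟨a, haa⟩ := cube_root _ hb3
    obtain ⟨b, hbb⟩ := cube_root _ hc3
    refine ⟨a, b, Or.inr ?_⟩
    ext i j
    fin_cases i <;> fin_cases j <;> simp [← haa, ← hbb, ha, hd]

noncomputable def Fmap : (Fin 3 × Fin 3) ⊕ (Fin 3 × Fin 3) → Gamma :=
  Sum.elim (fun p => ⟨dG p.1 p.2, dG_mem p.1 p.2⟩) (fun p => ⟨aG p.1 p.2, aG_mem p.1 p.2⟩)

lemma ωinj : Function.Injective (fun a : Fin 3 => ω ^ (a:ℕ)) := by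
  intro a b h
  exact Fin.ext (hω.pow_inj a.isLt b.isLt h)

lemma Fmap_bij : Function.Bijective Fmap := by
  constructor
  · rintro (⟨a, b⟩ | ⟨a, b⟩) (⟨a', b'⟩ | ⟨a', b'⟩) h <;>
      simp only [Fmap, Sum.elim_inl, Sum.elim_inr, Subtype.mk.injEq] at h
    · have hm := congrArg Units.val h
      have h00 := congrFun (congrFun hm 0) 0
      have h11 := congrFun (congrFun hm 1) 1
      simp [dG] at h00 h11
      exact congrArg Sum.inl (Prod.ext (ωinj h00) (ωinj h11))
    · have hm := congrArg Units.val h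
      have h01 := congrFun (congrFun hm 0) 1
      simp only [dG, aG, Units.val_mk, Matrix.cons_val_zero, Matrix.cons_val_one,
        Matrix.head_cons] at h01
      exact absurd h01.symm (ωne _)
    · have hm := congrArg Units.val h
      have h01 := congrFun (congrFun hm 0) 1
      simp only [dG, aG, Units.val_mk, Matrix.cons_val_zero, Matrix.cons_val_one,
        Matrix.head_cons] at h01
      exact absurd h01 (ωne _)
    · have hm := congrArg Units.val h
      have h01 := congrFun (congrFun hm 0) 1
      have h10 := congrFun (congrFun hm 1) 0
      simp [aG] at h01 h10
      exact congrArg Sum.inr (Prod.ext (ωinj h01) (ωinj h10))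
  · rintro ⟨g, hg⟩
    rcases gamma_forward g hg with ⟨a, b, h | h⟩
    · exact ⟨Sum.inl (a, b), Subtype.ext (Units.ext h.symm)⟩
    · exact ⟨Sum.inr (a, b), Subtype.ext (Units.ext h.symm)⟩

/-- **The stabilizer of `t₁³ + t₂³`.** `Γ` consists exactly of the 18 matrices
`[[ωᵃ, 0],[0, ωᵇ]]` and `[[0, ωᵃ],[ωᵇ, 0]]` with `a, b ∈ {0,1,2}`; in particular
it has order 18. -/
theorem gamma_description :
    (∀ g : GL (Fin 2) ℂ, g ∈ Gamma ↔
      ∃ a b : Fin 3,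
        (↑g : Matrix (Fin 2) (Fin 2) ℂ) = ![![ω ^ (a : ℕ), 0], ![0, ω ^ (b : ℕ)]] ∨
        (↑g : Matrix (Fin 2) (Fin 2) ℂ) = ![![0, ω ^ (a : ℕ)], ![ω ^ (b : ℕ), 0]]) ∧
    Nat.card Gamma = 18 := by
  constructor
  · intro g
    constructor
    · exact gamma_forward g
    · rintro ⟨a, b, h | h⟩
      · have : g = dG a b := Units.ext h
        rw [this]; exact dG_mem a b
      · have : g = aG a b := Units.ext h
        rw [this]; exact aG_mem a b
  · have := Nat.card_congr (Equiv.ofBijective Fmap Fmap_bij)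
    simp [Nat.card_eq_fintype_card] at this
    omega
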